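/- Let m ≥ 2 and let G(q) = Σ_{n≥0} sf(n,m) q^n be the generating function of the semi-m-Fibonacci numbers, viewed as a formal power series over ℤ. Then (1 − q^m) · G(q) = (1 + q + q² + ⋯ + q^{m−1} − q^m) · G(q^m), where G(q^m) denotes the power series obtained by substituting q^m for q in G. -/

import Mathlib

/-- The semi-`m`-Fibonacci numbers: `sfm m 0 = 1`; `sfm m n = sfm m (n / m)` if
`n > 0` and `m ∣ n`; and `sfm m n = sfm m (n - r) + sfm m (n - m)` if
`n ≡ r (mod m)` with `0 < r < m`, where terms with negative argument are `0`
(the value for `m ≤ 1` is junk). -/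
def sfm (m : ℕ) : ℕ → ℕ
  | 0 => 1
  | n + 1 =>
    if m ≤ 1 then 0
    else if (n + 1) % m = 0 then sfm m ((n + 1) / m)
    else sfm m ((n + 1) - (n + 1) % m) +
      if n + 1 < m then 0 else sfm m ((n + 1) - m)
  termination_by n => n
  decreasing_by
  · exact Nat.div_lt_self (Nat.succ_pos n) (by omega)
  · omega
  · omega

lemma sfm_dvd (m : ℕ) (hm : 2 ≤ m) (k : ℕ) (hk : m ∣ k) :
    sfm m k = sfm m (k / m) := by
  cases k with
  | zero => simp
  | succ n =>
    rw [sfm]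
    have h0 : (n + 1) % m = 0 := Nat.mod_eq_zero_of_dvd hk
    simp [h0, show ¬ m ≤ 1 by omega]

lemma sfm_not_dvd (m : ℕ) (hm : 2 ≤ m) (n : ℕ) (hn : n % m ≠ 0) :
    sfm m n = sfm m (n - n % m) + if n < m then 0 else sfm m (n - m) := by
  cases n with
  | zero => simp at hn
  | succ k =>
    rw [sfm]
    simp [hn, show ¬ m ≤ 1 by omega]

open PowerSeries

theorem sfm_genFun_eq (m : ℕ) (hm : 2 ≤ m) :
    -- `G` is the generating function of the semi-m-Fibonacci numbers and
    -- `Gm` is the series obtained from `G` by substituting `q ^ m` for `q`.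
    ∀ G Gm : PowerSeries ℤ,
      G = PowerSeries.mk (fun n => (sfm m n : ℤ)) →
      Gm = PowerSeries.mk (fun n => if m ∣ n then (sfm m (n / m) : ℤ) else 0) →
      (1 - X ^ m) * G = ((∑ i ∈ Finset.range m, X ^ i) - X ^ m) * Gm := by
  intro G Gm hG hGm
  ext n
  have hXG : ∀ (P : PowerSeries ℤ) (d : ℕ), X ^ d * P = P * X ^ d := fun P d => mul_comm _ _
  rw [sub_mul, sub_mul, one_mul, Finset.sum_mul, map_sub, map_sub, map_sum,
    hXG, hXG, coeff_mul_X_pow', coeff_mul_X_pow', hG, hGm]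
  simp only [coeff_mk]
  have hsum : ∑ i ∈ Finset.range m,
      (coeff n) (PowerSeries.mk (fun k => if m ∣ k then (sfm m (k / m) : ℤ) else 0) * X ^ i)
      = (sfm m ((n - n % m) / m) : ℤ) := by
    rw [Finset.sum_eq_single (n % m)]
    · rw [coeff_mul_X_pow']
      have h1 : n % m ≤ n := Nat.mod_le n m
      have h2 : m ∣ n - n % m := ⟨n / m, by have := Nat.div_add_mod n m; omega⟩
      simp [h1, h2]
    · intro i hi hne
      rw [coeff_mul_X_pow']
      rcases le_or_gt i n with h | h
      · have : ¬ m ∣ n - i := by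
          intro hd
          obtain ⟨c, hc⟩ := hd
          apply hne
          have hn : n = i + m * c := by omega
          rw [hn, Nat.add_mul_mod_self_left, Nat.mod_eq_of_lt (Finset.mem_range.mp hi)]
        simp [h, this]
      · simp [not_le.mpr h]
    · intro h
      exact absurd (Finset.mem_range.mpr (Nat.mod_lt n (by omega))) h
  simp only [hXG]
  rw [hsum]
  by_cases h0 : n % m = 0
  · -- m ∣ n
    have hd : m ∣ n := Nat.dvd_of_mod_eq_zero h0
    rcases Nat.eq_zero_or_pos n with rfl | hn
    · simp [show ¬ m ≤ 0 by omega]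
    · have hmn : m ≤ n := Nat.le_of_dvd hn hd
      have h1 : sfm m n = sfm m (n / m) := sfm_dvd m hm n hd
      have h2 : m ∣ n - m := Nat.dvd_sub hd dvd_rfl
      have h3 : sfm m (n - m) = sfm m ((n - m) / m) := sfm_dvd m hm (n - m) h2
      simp [hmn, h0, h1, h2, h3, Nat.sub_zero]
  · have hnd : ¬ m ∣ n := fun hd => h0 (Nat.mod_eq_zero_of_dvd hd)
    have key : (sfm m n : ℤ) = sfm m (n - n % m) + if m ≤ n then (sfm m (n - m) : ℤ) else 0 := by
      rw [sfm_not_dvd m hm n h0]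
      rcases le_or_gt m n with h | h
      · simp [h, show ¬ n < m by omega]
      · simp [show n < m by omega, not_le.mpr h]
    have hq : m ∣ n - n % m := ⟨n / m, by have := Nat.div_add_mod n m; omega⟩
    have h4 : sfm m (n - n % m) = sfm m ((n - n % m) / m) := sfm_dvd m hm _ hq
    rw [key, h4]
    rcases le_or_gt m n with h | h
    · have hnd2 : ¬ m ∣ n - m := by
        intro hd
        obtain ⟨c, hc⟩ := hd
        exact hnd ⟨c + 1, by rw [Nat.mul_succ]; omega⟩
      simp [h, hnd2]
    · simp [not_le.mpr h]
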